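/- For any $(\alpha,\beta,\gamma) \in (0,1)^3$ with $\beta+\gamma > 1$, every open square of side $r > 1$ with sides parallel to the axes contains a point of $L'_{(\alpha,\beta,\gamma)}$; i.e., $L'_{(\alpha,\beta,\gamma)} \cap (\boldsymbol{\zeta} + r(0,1)^2) \neq \emptyset$ for all $r > 1$ and $\boldsymbol{\zeta}\in\mathbb{R}^2$. Consequently $\rho([0,1]^2, \delta^{-1/2}L'_{(\alpha,\beta,\gamma)}) = \delta^{-1/2}$ where $\delta = (1-\alpha)\beta+\alpha\gamma$. -/

import Mathlib

private lemma floor_sub_cases (t x : ℝ) (h0 : 0 < x) (h1 : x < 1) :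
    ⌊t - x⌋ = ⌊t⌋ ∨ ⌊t - x⌋ = ⌊t⌋ - 1 := by
  have h2 : ⌊t - x⌋ ≤ ⌊t⌋ := Int.floor_le_floor (by linarith)
  have h4 : ⌊t⌋ - 1 ≤ ⌊t - x⌋ := by
    apply Int.le_floor.mpr
    push_cast
    linarith [Int.floor_le t]
  omega

private lemma sq_core (α β γ : ℝ) (hα0 : 0 < α) (hα1 : α < 1)
    (hβ0 : 0 < β) (hβ1 : β < 1) (hγ0 : 0 < γ) (hγ1 : γ < 1) (a b : ℝ) :
    ∃ m n : ℤ, a < m * α + n ∧ m * α + n ≤ a + 1 ∧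
      b < -(m * β) + n * (γ - β) ∧ -(m * β) + n * (γ - β) ≤ b + 1 := by
  classical
  set k : ℤ → ℤ := fun s => ⌊a - s * α⌋ + 1 with hk
  set y : ℤ → ℝ := fun s => -(s * β) + (k s) * (γ - β) with hy
  have hx : ∀ s : ℤ, a < s * α + k s ∧ s * α + k s ≤ a + 1 := by
    intro s
    have h1 := Int.floor_le (a - s * α)
    have h2 := Int.lt_floor_add_one (a - s * α)
    constructor <;> (simp only [hk]; push_cast; linarith)
  have hstep : ∀ s : ℤ, y (s+1) = y s - β ∨ y (s+1) = y s - γ := by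
    intro s
    have harg : a - ((s : ℝ) + 1) * α = (a - s * α) - α := by ring
    have hcases := floor_sub_cases (a - s * α) α hα0 hα1
    rcases hcases with h | h
    · left
      simp only [hy, hk]
      push_cast
      rw [harg, h]
      ring
    · right
      simp only [hy, hk]
      push_cast
      rw [harg, h]
      push_cast
      ring
  have hdec : ∀ s : ℤ, y s - 1 < y (s+1) ∧ y (s+1) ≤ y s - min β γ := by
    intro s
    rcases hstep s with h | h <;> rw [h] <;>
      exact ⟨by linarith [min_le_left β γ, min_le_right β γ],
             by linarith [min_le_left β γ, min_le_right β γ]⟩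
  have hmn : 0 < min β γ := lt_min hβ0 hγ0
  have hdown : ∀ (s₀ : ℤ) (n : ℕ), y (s₀ + n) ≤ y s₀ - n * min β γ := by
    intro s₀ n
    induction n with
    | zero => simp
    | succ n ih =>
      have h1 := (hdec (s₀ + n)).2
      have e1 : s₀ + ((n : ℤ) + 1) = (s₀ + n) + 1 := by ring
      push_cast
      rw [e1]
      push_cast at ih
      linarith
  have hup : ∀ (s₀ : ℤ) (n : ℕ), y s₀ + n * min β γ ≤ y (s₀ - n) := by
    intro s₀ n
    induction n with
    | zero => simp
    | succ n ih =>
      have h1 := (hdec (s₀ - (n+1 : ℕ))).2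
      have e1 : (s₀ - ((n : ℤ) + 1)) + 1 = s₀ - n := by ring
      push_cast at h1 ⊢
      rw [e1] at h1
      linarith
  -- find s₁ with y s₁ > b + 1
  obtain ⟨N, hN⟩ := exists_nat_gt ((b + 1 - y 0) / min β γ)
  have hs₁ : b + 1 < y ((0:ℤ) - N) := by
    have h1 := hup 0 N
    rw [div_lt_iff₀ hmn] at hN
    linarith
  have hex : ∃ n : ℕ, y (((0:ℤ) - N) + n) ≤ b + 1 := by
    obtain ⟨M, hM⟩ := exists_nat_gt ((y ((0:ℤ) - N) - (b+1)) / min β γ)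
    rw [div_lt_iff₀ hmn] at hM
    exact ⟨M, by linarith [hdown ((0:ℤ) - N) M]⟩
  set s₁ : ℤ := (0:ℤ) - N with hs1def
  set N₂ := Nat.find hex with hN₂
  have hfind : y (s₁ + N₂) ≤ b + 1 := Nat.find_spec hex
  have hN₂pos : N₂ ≠ 0 := by
    intro h
    rw [h] at hfind
    simp at hfind
    linarith
  have hprev : ¬ (y (s₁ + (N₂ - 1 : ℕ)) ≤ b + 1) := Nat.find_min hex (by omega)
  push_neg at hprev
  set s : ℤ := s₁ + N₂ with hsdef
  have hse : s = (s₁ + (N₂ - 1 : ℕ)) + 1 := by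
    rw [hsdef]
    push_cast [Nat.cast_sub (by omega : 1 ≤ N₂)]
    ring
  have h1 : b < y s := by
    have h2 := (hdec (s₁ + (N₂ - 1 : ℕ))).1
    rw [← hse] at h2
    linarith
  refine ⟨s, k s, (hx s).1, (hx s).2, ?_, ?_⟩
  · simpa only [hy] using h1
  · simpa only [hy] using hfind

private lemma strip_empty (α β γ : ℝ) (hα0 : 0 < α) (hα1 : α < 1)
    (hβ0 : 0 < β) (hγ0 : 0 < γ) (m n : ℤ)
    (hx0 : 0 < m * α + n) (hx1 : m * α + n < 1) :
    -(m * β) + n * (γ - β) ≤ -β ∨ γ ≤ -(m * β) + n * (γ - β) := by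
  have hxe : (m : ℝ) * α + n = ((m + n : ℤ) : ℝ) * α + (n : ℝ) * (1 - α) := by
    push_cast; ring
  have hye : -((m : ℝ) * β) + n * (γ - β) = -(((m + n : ℤ) : ℝ) * β) + (n : ℝ) * γ := by
    push_cast; ring
  rw [hxe] at hx0 hx1
  rw [hye]
  rcases le_or_gt (m + n) 0 with hM | hM <;> rcases le_or_gt n 0 with hn | hn
  · -- both ≤ 0 : x ≤ 0 contradiction
    exfalso
    have h1 : ((m + n : ℤ) : ℝ) ≤ 0 := by exact_mod_cast hM
    have h2 : (n : ℝ) ≤ 0 := by exact_mod_cast hn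
    nlinarith
  · -- M ≤ 0, n ≥ 1 : y ≥ γ
    right
    have h1 : ((m + n : ℤ) : ℝ) ≤ 0 := by exact_mod_cast hM
    have h2 : (1 : ℝ) ≤ (n : ℝ) := by exact_mod_cast (by omega : (1:ℤ) ≤ n)
    nlinarith
  · -- M ≥ 1, n ≤ 0 : y ≤ -β
    left
    have h1 : (1 : ℝ) ≤ ((m + n : ℤ) : ℝ) := by exact_mod_cast (by omega : (1:ℤ) ≤ m + n)
    have h2 : (n : ℝ) ≤ 0 := by exact_mod_cast hn
    nlinarith
  · -- M ≥ 1, n ≥ 1 : x ≥ 1 contradiction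
    exfalso
    have h1 : (1 : ℝ) ≤ ((m + n : ℤ) : ℝ) := by exact_mod_cast (by omega : (1:ℤ) ≤ m + n)
    have h2 : (1 : ℝ) ≤ (n : ℝ) := by exact_mod_cast (by omega : (1:ℤ) ≤ n)
    nlinarith

/-- For `(α,β,γ) ∈ (0,1)³` with `β+γ > 1`, every open axis-parallel square of side `r > 1`
contains a point of `L'_{(α,β,γ)} = ℤ(α,-β) + ℤ(1,γ-β)`; consequently the covering radius of
the unit square `[0,1]²` with respect to the rescaled unimodular lattice
`δ^{-1/2} L'_{(α,β,γ)}` equals `δ^{-1/2}`, where `δ = (1-α)β + αγ`. -/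
theorem lattice_meets_all_open_squares_and_covering_radius
    (α β γ : ℝ) (hα : α ∈ Set.Ioo (0:ℝ) 1) (hβ : β ∈ Set.Ioo (0:ℝ) 1)
    (hγ : γ ∈ Set.Ioo (0:ℝ) 1) (hβγ : 1 < β + γ) :
    (∀ r : ℝ, 1 < r → ∀ ζ : ℝ × ℝ,
      ∃ p : ℝ × ℝ, (∃ m n : ℤ, p = m • ((α, -β) : ℝ × ℝ) + n • ((1, γ - β) : ℝ × ℝ)) ∧
        ζ.1 < p.1 ∧ p.1 < ζ.1 + r ∧ ζ.2 < p.2 ∧ p.2 < ζ.2 + r) ∧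
    sInf {r : ℝ | 0 < r ∧ ∀ x : ℝ × ℝ,
        ∃ q ∈ Set.Icc (((0:ℝ), (0:ℝ)) : ℝ × ℝ) ((1:ℝ), (1:ℝ)),
          ∃ p : ℝ × ℝ, (∃ m n : ℤ, p = m • ((α, -β) : ℝ × ℝ) + n • ((1, γ - β) : ℝ × ℝ)) ∧
            x = r • q + (Real.sqrt ((1 - α) * β + α * γ))⁻¹ • p}
      = (Real.sqrt ((1 - α) * β + α * γ))⁻¹ := by
  obtain ⟨hα0, hα1⟩ := hα
  obtain ⟨hβ0, hβ1⟩ := hβ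
  obtain ⟨hγ0, hγ1⟩ := hγ
  have hpair : ∀ m n : ℤ, ((m * α + n : ℝ), (-(m * β) + n * (γ - β) : ℝ))
      = (m : ℤ) • ((α, -β) : ℝ × ℝ) + (n : ℤ) • ((1, γ - β) : ℝ × ℝ) := by
    intro m n
    simp only [Prod.smul_mk, zsmul_eq_mul, Prod.mk_add_mk, Prod.mk.injEq]
    constructor <;> ring
  constructor
  · intro r hr ζ
    obtain ⟨m, n, h1, h2, h3, h4⟩ := sq_core α β γ hα0 hα1 hβ0 hβ1 hγ0 hγ1 ζ.1 ζ.2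
    exact ⟨(m * α + n, -(m * β) + n * (γ - β)), ⟨m, n, hpair m n⟩,
      h1, by dsimp only; linarith, h3, by dsimp only; linarith⟩
  · have hδ : 0 < (1 - α) * β + α * γ := by nlinarith
    have hs0 : 0 < Real.sqrt ((1 - α) * β + α * γ) := Real.sqrt_pos.mpr hδ
    set c : ℝ := (Real.sqrt ((1 - α) * β + α * γ))⁻¹ with hcdef
    have hc : 0 < c := inv_pos.mpr hs0
    have hcs : c * Real.sqrt ((1 - α) * β + α * γ) = 1 := inv_mul_cancel₀ hs0.ne'
    set S : Set ℝ := {r : ℝ | 0 < r ∧ ∀ x : ℝ × ℝ,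
        ∃ q ∈ Set.Icc (((0:ℝ), (0:ℝ)) : ℝ × ℝ) ((1:ℝ), (1:ℝ)),
          ∃ p : ℝ × ℝ, (∃ m n : ℤ, p = m • ((α, -β) : ℝ × ℝ) + n • ((1, γ - β) : ℝ × ℝ)) ∧
            x = r • q + c • p} with hSdef
    have hmem : c ∈ S := by
      refine ⟨hc, fun x => ?_⟩
      set w : ℝ := Real.sqrt ((1 - α) * β + α * γ) with hwdef
      obtain ⟨m, n, h1, h2, h3, h4⟩ := sq_core α β γ hα0 hα1 hβ0 hβ1 hγ0 hγ1
        (w * x.1 - 1) (w * x.2 - 1)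
      refine ⟨(w * x.1 - (m * α + n), w * x.2 - (-(m * β) + n * (γ - β))), ?_,
        (m * α + n, -(m * β) + n * (γ - β)), ⟨m, n, hpair m n⟩, ?_⟩
      · rw [Set.mem_Icc]
        constructor <;> rw [Prod.mk_le_mk] <;> constructor <;> linarith
      · have e1 : x.1 = c * (w * x.1 - (m * α + n)) + c * (m * α + n) := by
          have : c * (w * x.1 - (m * α + n)) + c * (m * α + n) = (c * w) * x.1 := by ring
          rw [this, hcs, one_mul]
        have e2 : x.2 = c * (w * x.2 - (-(m * β) + n * (γ - β)))
            + c * (-(m * β) + n * (γ - β)) := by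
          have : c * (w * x.2 - (-(m * β) + n * (γ - β)))
              + c * (-(m * β) + n * (γ - β)) = (c * w) * x.2 := by ring
          rw [this, hcs, one_mul]
        apply Prod.ext <;> simp only [Prod.smul_mk, smul_eq_mul, Prod.mk_add_mk,
          Prod.fst_add, Prod.snd_add, Prod.smul_fst, Prod.smul_snd]
        · exact e1
        · exact e2
    have hlb : ∀ r ∈ S, c ≤ r := by
      intro r hr
      by_contra hlt
      push_neg at hlt
      obtain ⟨hr0, hcov⟩ := hr
      set t : ℝ := r / c with htdef
      have ht0 : 0 < t := div_pos hr0 hc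
      have ht1 : t < 1 := (div_lt_one hc).mpr hlt
      have hrtc : r = t * c := by rw [htdef, div_mul_cancel₀ _ hc.ne']
      obtain ⟨q, hq, p, ⟨m, n, hp⟩, hx⟩ := hcov (c • (((1 + t) / 2 : ℝ), ((γ - β + t) / 2 : ℝ)))
      rw [Set.mem_Icc, Prod.mk_le_mk, Prod.mk_le_mk] at hq
      obtain ⟨⟨hq1, hq2⟩, hq3, hq4⟩ := hq
      have hp1 : p.1 = m * α + n := by rw [hp, ← hpair m n]
      have hp2 : p.2 = -(m * β) + n * (γ - β) := by rw [hp, ← hpair m n]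
      have hx1 : c * ((1 + t) / 2) = r * q.1 + c * p.1 := by
        have := congrArg Prod.fst hx
        simpa [Prod.fst_add, Prod.smul_mk, smul_eq_mul] using this
      have hx2 : c * ((γ - β + t) / 2) = r * q.2 + c * p.2 := by
        have := congrArg Prod.snd hx
        simpa [Prod.snd_add, Prod.smul_mk, smul_eq_mul] using this
      rw [hrtc] at hx1 hx2
      have hpe1 : (1 + t) / 2 = t * q.1 + p.1 := by
        apply mul_left_cancel₀ hc.ne'
        rw [hx1]; ring
      have hpe2 : (γ - β + t) / 2 = t * q.2 + p.2 := by
        apply mul_left_cancel₀ hc.ne'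
        rw [hx2]; ring
      have hb0 : 0 < p.1 := by nlinarith
      have hb1 : p.1 < 1 := by nlinarith
      rw [hp1] at hb0 hb1
      have := strip_empty α β γ hα0 hα1 hβ0 hγ0 m n hb0 hb1
      rw [← hp2] at this
      rcases this with h | h <;> nlinarith
    exact le_antisymm (csInf_le ⟨c, hlb⟩ hmem) (le_csInf ⟨c, hmem⟩ hlb)
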